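/- Suppose α, β : ℝ → ℝ are differentiable with α + β nowhere zero, and suppose h, θ, G satisfy α = θ'/G, β = λ h⁻¹ sin θ, h' = -λ G cos θ with h nowhere zero, λ ≠ 0, G nowhere zero. Then β' = -(h'/h)(α + β), and hence h'/h = -β'/(α + β). -/

import Mathlib

theorem beta_prime_formula (lam : ℝ) (hlam : lam ≠ 0)
    (θ h G α β : ℝ → ℝ)
    (hθ : Differentiable ℝ θ) (hh : Differentiable ℝ h)
    (hG0 : ∀ r, G r ≠ 0) (hh0 : ∀ r, h r ≠ 0)
    (hαβ : ∀ r, α r + β r ≠ 0)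
    (hα : ∀ r, α r = deriv θ r / G r)
    (hβ : ∀ r, β r = lam * (h r)⁻¹ * Real.sin (θ r))
    (hhode : ∀ r, deriv h r = -lam * G r * Real.cos (θ r)) :
    ∀ r, deriv β r = -(deriv h r / h r) * (α r + β r) ∧
      deriv h r / h r = -(deriv β r) / (α r + β r) := by
  have hβfun : β = fun r => lam * (h r)⁻¹ * Real.sin (θ r) := funext hβ
  intro r
  have h1 : HasDerivAt (fun r => lam * (h r)⁻¹)
      (lam * (-deriv h r / h r ^ 2)) r :=
    (((hh r).hasDerivAt).inv (hh0 r)).const_mul lam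
  have h3 : HasDerivAt (fun r => Real.sin (θ r))
      (Real.cos (θ r) * deriv θ r) r := ((hθ r).hasDerivAt).sin
  have h4 := h1.mul h3
  have hder : deriv β r = lam * (-deriv h r / h r ^ 2) * Real.sin (θ r)
      + lam * (h r)⁻¹ * (Real.cos (θ r) * deriv θ r) := by
    rw [hβfun]; exact h4.deriv
  have hθ' : deriv θ r = α r * G r := by
    rw [hα r, div_mul_cancel₀ _ (hG0 r)]
  have key : deriv β r = -(deriv h r / h r) * (α r + β r) := by
    rw [hder, hhode, hθ', hβ]
    have hhr := hh0 r
    field_simp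
    ring
  refine ⟨key, ?_⟩
  rw [key]
  rw [neg_mul, neg_neg, mul_div_assoc, div_self (hαβ r), mul_one]
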